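/- For any weights a > 0 and b > 0, the generalized variation of information L_GVI is a quasimetric on the set of partitions of {1,…,n}: it satisfies the identity of indiscernibles (L_GVI(ρ, ρ̂) = 0 if and only if ρ = ρ̂) and the triangle inequality (L_GVI(ρ₁, ρ₂) + L_GVI(ρ₂, ρ₃) ≥ L_GVI(ρ₁, ρ₃) for all partitions ρ₁, ρ₂, ρ₃). -/

import Mathlib

open Finset

/-- A partition of `{1,…,n}`: a set of nonempty, pairwise disjoint clusters covering everything. -/
def IsPartition {n : ℕ} (ρ : Finset (Finset (Fin n))) : Prop :=
  (∀ S ∈ ρ, S.Nonempty) ∧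
  (∀ S ∈ ρ, ∀ T ∈ ρ, S ≠ T → Disjoint S T) ∧
  (∀ i : Fin n, ∃ S ∈ ρ, i ∈ S)

/-- Entropy of a partition: `H(ρ) = -∑_{S∈ρ} (|S|/n)·log₂(|S|/n)`. -/
noncomputable def ent {n : ℕ} (ρ : Finset (Finset (Fin n))) : ℝ :=
  - ∑ S ∈ ρ, ((S.card : ℝ) / n) * Real.logb 2 ((S.card : ℝ) / n)

/-- Joint entropy: `H(ρ, τ) = -∑_{S∈ρ} ∑_{T∈τ} (|S∩T|/n)·log₂(|S∩T|/n)` (with `0·log₂ 0 = 0`). -/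
noncomputable def jent {n : ℕ} (ρ τ : Finset (Finset (Fin n))) : ℝ :=
  - ∑ S ∈ ρ, ∑ T ∈ τ, (((S ∩ T).card : ℝ) / n) * Real.logb 2 (((S ∩ T).card : ℝ) / n)

/-- Mutual information: `I(ρ, τ) = H(ρ) + H(τ) - H(ρ, τ)`. -/
noncomputable def mi {n : ℕ} (ρ τ : Finset (Finset (Fin n))) : ℝ :=
  ent ρ + ent τ - jent ρ τ

/-- Conditional entropy: `H(ρ ∣ τ) = H(ρ, τ) - H(τ)`. -/
noncomputable def cent {n : ℕ} (ρ τ : Finset (Finset (Fin n))) : ℝ :=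
  jent ρ τ - ent τ

/-- Generalized variation of information:
`L_GVI(ρ, τ) = b·H(ρ) + a·H(τ) - (a+b)·I(ρ, τ)`. -/
noncomputable def gvi {n : ℕ} (a b : ℝ) (ρ τ : Finset (Finset (Fin n))) : ℝ :=
  b * ent ρ + a * ent τ - (a + b) * mi ρ τ

namespace GVIAux

/-! ### Generic log-sum machinery -/

/-- Log-sum inequality core: `∑ pᵢ log(qᵢ/pᵢ) ≤ P log(Q/P)`. -/
lemma log_sum_core {ι : Type*} (t : Finset ι) (p q : ι → ℝ)
    (hp : ∀ i ∈ t, 0 ≤ p i) (hq : ∀ i ∈ t, 0 < q i)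
    (hP : 0 < ∑ i ∈ t, p i) :
    ∑ i ∈ t, p i * Real.log (q i / p i) ≤
      (∑ i ∈ t, p i) * Real.log ((∑ i ∈ t, q i) / (∑ i ∈ t, p i)) := by
  classical
  set P := ∑ i ∈ t, p i with hPdef
  set t' := t.filter (fun i => p i ≠ 0) with ht'
  have hsub : t' ⊆ t := Finset.filter_subset _ _
  have hpos : ∀ i ∈ t', 0 < p i := fun i hi => by
    rw [Finset.mem_filter] at hi
    exact lt_of_le_of_ne (hp i hi.1) (Ne.symm hi.2)
  have hPt' : ∑ i ∈ t', p i = P := Finset.sum_filter_of_ne (fun i hi h => h)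
  have hLHS : ∑ i ∈ t, p i * Real.log (q i / p i) = ∑ i ∈ t', p i * Real.log (q i / p i) :=
    (Finset.sum_filter_of_ne (fun i hi h => by
      intro hp0; rw [hp0] at h; simp at h)).symm
  have ht'ne : t'.Nonempty := by
    by_contra h
    rw [Finset.not_nonempty_iff_eq_empty] at h
    rw [← hPt', h, Finset.sum_empty] at hP
    exact lt_irrefl 0 hP
  have hQ'pos : 0 < ∑ i ∈ t', q i :=
    Finset.sum_pos (fun i hi => hq i (hsub hi)) ht'ne
  have hQ'le : ∑ i ∈ t', q i ≤ ∑ i ∈ t, q i :=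
    Finset.sum_le_sum_of_subset_of_nonneg hsub (fun i hi _ => (hq i hi).le)
  have jensen := (strictConcaveOn_log_Ioi.concaveOn).le_map_sum
    (t := t') (w := fun i => p i / P) (p := fun i => q i / p i)
    (fun i _ => div_nonneg (hp i (hsub ‹_›)) hP.le)
    (by rw [← Finset.sum_div, hPt', div_self (ne_of_gt hP)])
    (fun i hi => Set.mem_Ioi.mpr (div_pos (hq i (hsub hi)) (hpos i hi)))
  simp only [smul_eq_mul] at jensen
  have hsum_eq : ∑ i ∈ t', p i / P * (q i / p i) = (∑ i ∈ t', q i) / P := by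
    rw [Finset.sum_div]
    refine Finset.sum_congr rfl fun i hi => ?_
    have := (hpos i hi).ne'
    field_simp
  rw [hsum_eq] at jensen
  have step1 : ∑ i ∈ t', p i * Real.log (q i / p i)
      = P * ∑ i ∈ t', p i / P * Real.log (q i / p i) := by
    rw [Finset.mul_sum]
    refine Finset.sum_congr rfl fun i hi => ?_
    have := (hpos i hi).ne'
    field_simp
  have step2 : P * ∑ i ∈ t', p i / P * Real.log (q i / p i)
      ≤ P * Real.log ((∑ i ∈ t', q i) / P) :=
    mul_le_mul_of_nonneg_left jensen hP.le
  have step3 : P * Real.log ((∑ i ∈ t', q i) / P) ≤ P * Real.log ((∑ i ∈ t, q i) / P) := by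
    apply mul_le_mul_of_nonneg_left _ hP.le
    apply Real.log_le_log (div_pos hQ'pos hP)
    exact (div_le_div_iff_of_pos_right hP).mpr hQ'le
  rw [hLHS]
  calc ∑ i ∈ t', p i * Real.log (q i / p i)
      = P * ∑ i ∈ t', p i / P * Real.log (q i / p i) := step1
    _ ≤ P * Real.log ((∑ i ∈ t', q i) / P) := step2
    _ ≤ P * Real.log ((∑ i ∈ t, q i) / P) := step3

/-- Bridge: rewrite a `logb`-difference term via `log`. -/
lemma term_bridge {p q c : ℝ} (hp : 0 ≤ p) (hq : 0 < q) (hc : 0 < c) :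
    p / c * (Real.logb 2 (q / c) - Real.logb 2 (p / c))
      = p * Real.log (q / p) / (c * Real.log 2) := by
  rcases eq_or_lt_of_le hp with h0 | h0
  · rw [← h0]
    simp
  · rw [Real.logb, Real.logb, div_sub_div_same,
      ← Real.log_div (by positivity) (by positivity)]
    have : q / c / (p / c) = q / p := by
      field_simp
    rw [this]
    field_simp

/-- Log-sum inequality, `logb`-difference form. -/
lemma log_sum_ineq {ι : Type*} (t : Finset ι) (p q : ι → ℝ) (c : ℝ) (hc : 0 < c)
    (hp : ∀ i ∈ t, 0 ≤ p i) (hpq : ∀ i ∈ t, p i ≤ q i) (hq : ∀ i ∈ t, 0 < q i) :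
    ∑ i ∈ t, p i / c * (Real.logb 2 (q i / c) - Real.logb 2 (p i / c)) ≤
      (∑ i ∈ t, p i) / c *
        (Real.logb 2 ((∑ i ∈ t, q i) / c) - Real.logb 2 ((∑ i ∈ t, p i) / c)) := by
  have hPnn : 0 ≤ ∑ i ∈ t, p i := Finset.sum_nonneg hp
  rcases eq_or_lt_of_le hPnn with hP0 | hP0
  · have hall : ∀ i ∈ t, p i = 0 := by
      intro i hi
      exact (Finset.sum_eq_zero_iff_of_nonneg hp).mp hP0.symm i hi
    have hL : ∑ i ∈ t, p i / c * (Real.logb 2 (q i / c) - Real.logb 2 (p i / c)) = 0 :=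
      Finset.sum_eq_zero fun i hi => by rw [hall i hi]; simp
    rw [hL, ← hP0]
    simp
  · have hQpos : 0 < ∑ i ∈ t, q i := lt_of_lt_of_le hP0 (Finset.sum_le_sum hpq)
    calc ∑ i ∈ t, p i / c * (Real.logb 2 (q i / c) - Real.logb 2 (p i / c))
        = ∑ i ∈ t, p i * Real.log (q i / p i) / (c * Real.log 2) := by
          exact Finset.sum_congr rfl fun i hi => term_bridge (hp i hi) (hq i hi) hc
      _ = (∑ i ∈ t, p i * Real.log (q i / p i)) / (c * Real.log 2) := by
          rw [Finset.sum_div]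
      _ ≤ ((∑ i ∈ t, p i) * Real.log ((∑ i ∈ t, q i) / (∑ i ∈ t, p i))) / (c * Real.log 2) := by
          apply (div_le_div_iff_of_pos_right (by positivity)).mpr
          exact log_sum_core t p q hp hq hP0
      _ = (∑ i ∈ t, p i) / c *
            (Real.logb 2 ((∑ i ∈ t, q i) / c) - Real.logb 2 ((∑ i ∈ t, p i) / c)) := by
          rw [term_bridge hPnn hQpos hc]

/-- Grouping monotonicity for `x logb x` style sums. -/
lemma sum_h_le {n : ℕ} (hn : 0 < n) {ι : Type*} (t : Finset ι) (a : ι → ℕ) :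
    ∑ i ∈ t, ((a i : ℝ) / n) * Real.logb 2 ((a i : ℝ) / n) ≤
      ((∑ i ∈ t, (a i : ℝ)) / n) * Real.logb 2 ((∑ i ∈ t, (a i : ℝ)) / n) := by
  have hA : ∀ i ∈ t, (a i : ℝ) ≤ ∑ j ∈ t, (a j : ℝ) := fun i hi =>
    Finset.single_le_sum (f := fun j => (a j : ℝ)) (fun j _ => by positivity) hi
  calc ∑ i ∈ t, ((a i : ℝ) / n) * Real.logb 2 ((a i : ℝ) / n)
      ≤ ∑ i ∈ t, ((a i : ℝ) / n) * Real.logb 2 ((∑ j ∈ t, (a j : ℝ)) / n) := by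
        refine Finset.sum_le_sum fun i hi => ?_
        rcases Nat.eq_zero_or_pos (a i) with h | h
        · simp [h]
        · apply mul_le_mul_of_nonneg_left _ (by positivity)
          apply Real.logb_le_logb_of_le one_lt_two
          · exact div_pos (by exact_mod_cast h) (by exact_mod_cast hn)
          · exact (div_le_div_iff_of_pos_right (by exact_mod_cast hn)).mpr (hA i hi)
    _ = ((∑ i ∈ t, (a i : ℝ)) / n) * Real.logb 2 ((∑ i ∈ t, (a i : ℝ)) / n) := by
        rw [← Finset.sum_mul, ← Finset.sum_div]

/-! ### Partition basics -/

variable {n : ℕ}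

/-- Refinement of partitions. -/
def Refines (σ τ : Finset (Finset (Fin n))) : Prop := ∀ Q ∈ σ, ∃ T ∈ τ, Q ⊆ T

lemma part_eq {ρ : Finset (Finset (Fin n))} (hρ : IsPartition ρ) {S S' : Finset (Fin n)}
    (hS : S ∈ ρ) (hS' : S' ∈ ρ) {i : Fin n} (hi : i ∈ S) (hi' : i ∈ S') : S = S' := by
  by_contra h
  exact absurd hi' (Finset.disjoint_left.mp (hρ.2.1 S hS S' hS' h) hi)

lemma sum_card_inter {ρ : Finset (Finset (Fin n))} (hρ : IsPartition ρ) (T : Finset (Fin n)) :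
    ∑ S ∈ ρ, (S ∩ T).card = T.card := by
  rw [← Finset.card_biUnion]
  · congr 1
    ext i
    simp only [Finset.mem_biUnion, Finset.mem_inter]
    constructor
    · rintro ⟨S, _, _, h⟩; exact h
    · intro h
      obtain ⟨S, hS, hiS⟩ := hρ.2.2 i
      exact ⟨S, hS, hiS, h⟩
  · intro S hS S' hS' hne
    exact (hρ.2.1 S hS S' hS' hne).mono inter_subset_left inter_subset_left

lemma jent_comm (ρ τ : Finset (Finset (Fin n))) : jent ρ τ = jent τ ρ := by
  unfold jent
  congr 1
  rw [Finset.sum_comm]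
  exact Finset.sum_congr rfl fun T _ => Finset.sum_congr rfl fun S _ => by
    rw [Finset.inter_comm]

lemma mem_of_refines {ρ τ : Finset (Finset (Fin n))} (hρ : IsPartition ρ)
    (h1 : Refines ρ τ) (h2 : Refines τ ρ) {Q : Finset (Fin n)} (hQ : Q ∈ ρ) : Q ∈ τ := by
  obtain ⟨T, hT, hQT⟩ := h1 Q hQ
  obtain ⟨S, hS, hTS⟩ := h2 T hT
  obtain ⟨i, hi⟩ := hρ.1 Q hQ
  have hQS : Q = S := part_eq hρ hQ hS hi (hTS (hQT hi))
  have : Q = T := hQT.antisymm (hQS ▸ hTS)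
  exact this ▸ hT

lemma eq_of_refines {ρ τ : Finset (Finset (Fin n))} (hρ : IsPartition ρ) (hτ : IsPartition τ)
    (h1 : Refines ρ τ) (h2 : Refines τ ρ) : ρ = τ :=
  Finset.Subset.antisymm (fun _ hQ => mem_of_refines hρ h1 h2 hQ)
    (fun _ hQ => mem_of_refines hτ h2 h1 hQ)

/-! ### The conditional entropy formula -/

lemma cent_eq {X : Finset (Finset (Fin n))} (hX : IsPartition X)
    (W : Finset (Finset (Fin n))) :
    cent X W = ∑ Q ∈ W, ∑ S ∈ X, ((S ∩ Q).card : ℝ) / n *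
      (Real.logb 2 ((Q.card : ℝ) / n) - Real.logb 2 (((S ∩ Q).card : ℝ) / n)) := by
  unfold cent jent ent
  rw [Finset.sum_comm, neg_sub_neg, ← Finset.sum_sub_distrib]
  refine Finset.sum_congr rfl fun Q _ => ?_
  have key : ((Q.card : ℝ) / n) * Real.logb 2 ((Q.card : ℝ) / n)
      = ∑ S ∈ X, ((S ∩ Q).card : ℝ) / n * Real.logb 2 ((Q.card : ℝ) / n) := by
    rw [← Finset.sum_mul, ← Finset.sum_div, ← Nat.cast_sum, sum_card_inter hX Q]
  rw [key, ← Finset.sum_sub_distrib]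
  exact Finset.sum_congr rfl fun S _ => by ring

lemma term_nonneg (hn : 0 < n) (S Q : Finset (Fin n)) :
    0 ≤ ((S ∩ Q).card : ℝ) / n *
      (Real.logb 2 ((Q.card : ℝ) / n) - Real.logb 2 (((S ∩ Q).card : ℝ) / n)) := by
  rcases Nat.eq_zero_or_pos (S ∩ Q).card with h | h
  · simp [h]
  · apply mul_nonneg
    · positivity
    · rw [sub_nonneg]
      apply Real.logb_le_logb_of_le one_lt_two
      · exact div_pos (by exact_mod_cast h) (by exact_mod_cast hn)
      · gcongr
        exact Finset.inter_subset_right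

lemma cent_nonneg (hn : 0 < n) {X : Finset (Finset (Fin n))} (hX : IsPartition X)
    (W : Finset (Finset (Fin n))) : 0 ≤ cent X W := by
  rw [cent_eq hX W]
  exact Finset.sum_nonneg fun Q _ => Finset.sum_nonneg fun S _ => term_nonneg hn S Q

lemma term_eq_zero (hn : 0 < n) {S Q : Finset (Fin n)}
    (h : ((S ∩ Q).card : ℝ) / n *
      (Real.logb 2 ((Q.card : ℝ) / n) - Real.logb 2 (((S ∩ Q).card : ℝ) / n)) = 0)
    (hne : 0 < (S ∩ Q).card) : Q ⊆ S := by
  have hn' : (0:ℝ) < n := by exact_mod_cast hn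
  have hpos : (0:ℝ) < ((S ∩ Q).card : ℝ) / n := div_pos (by exact_mod_cast hne) hn'
  have hcard : (S ∩ Q).card = Q.card := by
    by_contra hlt
    have hlt' : (S ∩ Q).card < Q.card :=
      lt_of_le_of_ne (Finset.card_le_card Finset.inter_subset_right) hlt
    have : Real.logb 2 (((S ∩ Q).card : ℝ) / n) < Real.logb 2 ((Q.card : ℝ) / n) := by
      apply Real.logb_lt_logb one_lt_two hpos
      exact (div_lt_div_iff_of_pos_right hn').mpr (by exact_mod_cast hlt')
    rcases mul_eq_zero.mp h with h' | h'
    · exact absurd h' (ne_of_gt hpos)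
    · rw [sub_eq_zero] at h'
      exact absurd h'.symm (ne_of_lt this)
  exact Finset.inter_eq_right.mp
    (Finset.eq_of_subset_of_card_le Finset.inter_subset_right (le_of_eq hcard.symm))

lemma refines_of_cent_eq_zero (hn : 0 < n) {X W : Finset (Finset (Fin n))}
    (hX : IsPartition X) (hW : IsPartition W) (h : cent X W = 0) : Refines W X := by
  rw [cent_eq hX W] at h
  have hterm := (Finset.sum_eq_zero_iff_of_nonneg
    (fun Q _ => Finset.sum_nonneg fun S _ => term_nonneg hn S Q)).mp h
  intro Q hQ
  obtain ⟨i, hi⟩ := hW.1 Q hQ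
  obtain ⟨S, hS, hiS⟩ := hX.2.2 i
  refine ⟨S, hS, ?_⟩
  have hterm2 := (Finset.sum_eq_zero_iff_of_nonneg
    (fun S _ => term_nonneg hn S Q)).mp (hterm Q hQ) S hS
  exact term_eq_zero hn hterm2
    (Finset.card_pos.mpr ⟨i, Finset.mem_inter.mpr ⟨hiS, hi⟩⟩)

lemma cent_eq_zero_of_refines {X W : Finset (Finset (Fin n))}
    (hX : IsPartition X) (hr : Refines W X) : cent X W = 0 := by
  rw [cent_eq hX W]
  refine Finset.sum_eq_zero fun Q hQ => Finset.sum_eq_zero fun S hS => ?_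
  rcases Nat.eq_zero_or_pos (S ∩ Q).card with h | h
  · simp [h]
  · obtain ⟨T, hT, hQT⟩ := hr Q hQ
    obtain ⟨i, hi⟩ := Finset.card_pos.mp h
    rw [Finset.mem_inter] at hi
    have hST : S = T := part_eq hX hS hT hi.1 (hQT hi.2)
    have hQS : S ∩ Q = Q := Finset.inter_eq_right.mpr (hST ▸ hQT)
    rw [hQS]
    ring

/-! ### The meet of two partitions -/

/-- The common refinement (meet) of two partitions. -/
def pmeet (ρ τ : Finset (Finset (Fin n))) : Finset (Finset (Fin n)) :=
  ((ρ ×ˢ τ).image fun p => p.1 ∩ p.2).filter fun Q => Q.Nonempty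

lemma mem_pmeet {ρ τ : Finset (Finset (Fin n))} {Q : Finset (Fin n)} :
    Q ∈ pmeet ρ τ ↔ Q.Nonempty ∧ ∃ S ∈ ρ, ∃ T ∈ τ, Q = S ∩ T := by
  constructor
  · intro hQ
    rw [pmeet, Finset.mem_filter, Finset.mem_image] at hQ
    obtain ⟨⟨p, hp, rfl⟩, hne⟩ := hQ
    rw [Finset.mem_product] at hp
    exact ⟨hne, p.1, hp.1, p.2, hp.2, rfl⟩
  · rintro ⟨hne, S, hS, T, hT, rfl⟩
    rw [pmeet, Finset.mem_filter, Finset.mem_image]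
    exact ⟨⟨(S, T), Finset.mem_product.mpr ⟨hS, hT⟩, rfl⟩, hne⟩

lemma pmeet_isPartition {ρ τ : Finset (Finset (Fin n))}
    (hρ : IsPartition ρ) (hτ : IsPartition τ) : IsPartition (pmeet ρ τ) := by
  refine ⟨fun Q hQ => (mem_pmeet.mp hQ).1, ?_, ?_⟩
  · rintro Q hQ Q' hQ' hne
    obtain ⟨_, S, hS, T, hT, rfl⟩ := mem_pmeet.mp hQ
    obtain ⟨_, S', hS', T', hT', rfl⟩ := mem_pmeet.mp hQ'
    rw [Finset.disjoint_left]
    intro i hi hi'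
    rw [Finset.mem_inter] at hi hi'
    exact hne (by rw [part_eq hρ hS hS' hi.1 hi'.1, part_eq hτ hT hT' hi.2 hi'.2])
  · intro i
    obtain ⟨S, hS, hiS⟩ := hρ.2.2 i
    obtain ⟨T, hT, hiT⟩ := hτ.2.2 i
    exact ⟨S ∩ T, mem_pmeet.mpr ⟨⟨i, Finset.mem_inter.mpr ⟨hiS, hiT⟩⟩, S, hS, T, hT, rfl⟩,
      Finset.mem_inter.mpr ⟨hiS, hiT⟩⟩

lemma pmeet_refines {ρ τ : Finset (Finset (Fin n))} : Refines (pmeet ρ τ) ρ := by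
  intro Q hQ
  obtain ⟨_, S, hS, T, hT, rfl⟩ := mem_pmeet.mp hQ
  exact ⟨S, hS, Finset.inter_subset_left⟩

lemma sum_pmeet {ρ τ : Finset (Finset (Fin n))} (hρ : IsPartition ρ) (hτ : IsPartition τ)
    (f : Finset (Fin n) → ℝ) (hf : f ∅ = 0) :
    ∑ Q ∈ pmeet ρ τ, f Q = ∑ S ∈ ρ, ∑ T ∈ τ, f (S ∩ T) := by
  rw [← Finset.sum_product']
  rw [← Finset.sum_filter_add_sum_filter_not (ρ ×ˢ τ) (fun p => (p.1 ∩ p.2).Nonempty)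
    (fun p => f (p.1 ∩ p.2))]
  have h2 : ∑ p ∈ (ρ ×ˢ τ).filter (fun p => ¬ (p.1 ∩ p.2).Nonempty), f (p.1 ∩ p.2) = 0 := by
    apply Finset.sum_eq_zero
    intro p hp
    rw [Finset.mem_filter] at hp
    rw [Finset.not_nonempty_iff_eq_empty.mp hp.2, hf]
  rw [h2, add_zero]
  have himg : pmeet ρ τ = ((ρ ×ˢ τ).filter fun p => (p.1 ∩ p.2).Nonempty).image
      fun p => p.1 ∩ p.2 := by
    rw [pmeet, Finset.filter_image]
  rw [himg, Finset.sum_image]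
  intro p hp p' hp' heq
  rw [Finset.mem_coe, Finset.mem_filter, Finset.mem_product] at hp hp'
  obtain ⟨i, hi⟩ := hp.2
  have hi' : i ∈ p'.1 ∩ p'.2 := (show p.1 ∩ p.2 = p'.1 ∩ p'.2 from heq) ▸ hi
  rw [Finset.mem_inter] at hi hi'
  exact Prod.ext (part_eq hρ hp.1.1 hp'.1.1 hi.1 hi'.1) (part_eq hτ hp.1.2 hp'.1.2 hi.2 hi'.2)

lemma ent_pmeet {ρ τ : Finset (Finset (Fin n))} (hρ : IsPartition ρ) (hτ : IsPartition τ) :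
    ent (pmeet ρ τ) = jent ρ τ := by
  unfold ent jent
  congr 1
  exact sum_pmeet hρ hτ (fun Q => ((Q.card : ℝ) / n) * Real.logb 2 ((Q.card : ℝ) / n))
    (by simp)

lemma jent_pmeet_right {Y Z : Finset (Finset (Fin n))} (hY : IsPartition Y)
    (hZ : IsPartition Z) (X : Finset (Finset (Fin n))) :
    jent X (pmeet Y Z) = - ∑ S ∈ X, ∑ R ∈ Y, ∑ T ∈ Z,
      (((S ∩ (R ∩ T)).card : ℝ) / n) * Real.logb 2 (((S ∩ (R ∩ T)).card : ℝ) / n) := by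
  unfold jent
  congr 1
  refine Finset.sum_congr rfl fun S _ => ?_
  exact sum_pmeet hY hZ
    (fun Q => (((S ∩ Q).card : ℝ) / n) * Real.logb 2 (((S ∩ Q).card : ℝ) / n))
    (by simp)

lemma jent_le_jent_pmeet (hn : 0 < n) {Y Z : Finset (Finset (Fin n))}
    (hY : IsPartition Y) (hZ : IsPartition Z) (X : Finset (Finset (Fin n))) :
    jent X Z ≤ jent X (pmeet Y Z) := by
  rw [jent_pmeet_right hY hZ X]
  unfold jent
  rw [neg_le_neg_iff]
  refine Finset.sum_le_sum fun S _ => ?_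
  rw [Finset.sum_comm]
  refine Finset.sum_le_sum fun T _ => ?_
  have hre : ∀ R : Finset (Fin n), S ∩ (R ∩ T) = R ∩ (S ∩ T) := fun R => by
    ext j; simp only [Finset.mem_inter]; tauto
  calc ∑ R ∈ Y, (((S ∩ (R ∩ T)).card : ℝ) / n) * Real.logb 2 (((S ∩ (R ∩ T)).card : ℝ) / n)
      = ∑ R ∈ Y, (((R ∩ (S ∩ T)).card : ℝ) / n) * Real.logb 2 (((R ∩ (S ∩ T)).card : ℝ) / n) := by
        refine Finset.sum_congr rfl fun R _ => ?_
        rw [hre R]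
    _ ≤ ((∑ R ∈ Y, ((R ∩ (S ∩ T)).card : ℝ)) / n) *
          Real.logb 2 ((∑ R ∈ Y, ((R ∩ (S ∩ T)).card : ℝ)) / n) :=
        sum_h_le hn Y (fun R => (R ∩ (S ∩ T)).card)
    _ = (((S ∩ T).card : ℝ) / n) * Real.logb 2 (((S ∩ T).card : ℝ) / n) := by
        rw [← Nat.cast_sum, sum_card_inter hY (S ∩ T)]

/-! ### Regrouping along a refinement -/

lemma sum_refines {W Y : Finset (Finset (Fin n))} (hW : IsPartition W) (hY : IsPartition Y)
    (hr : Refines W Y) (f : Finset (Fin n) → ℝ) :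
    ∑ Q ∈ W, f Q = ∑ R ∈ Y, ∑ Q ∈ W.filter (· ⊆ R), f Q := by
  have step : ∀ R ∈ Y, ∑ Q ∈ W.filter (· ⊆ R), f Q
      = ∑ Q ∈ W, if Q ⊆ R then f Q else 0 := fun R _ => Finset.sum_filter _ _
  rw [Finset.sum_congr rfl step, Finset.sum_comm]
  refine (Finset.sum_congr rfl fun Q hQ => ?_)
  obtain ⟨R₀, hR₀, hsub⟩ := hr Q hQ
  rw [Finset.sum_eq_single_of_mem R₀ hR₀]
  · rw [if_pos hsub]
  · intro R hR hne
    rw [if_neg]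
    intro hsub'
    obtain ⟨i, hi⟩ := hW.1 Q hQ
    exact hne (part_eq hY hR hR₀ (hsub' hi) (hsub hi))

lemma sum_card_inter_filter {W Y : Finset (Finset (Fin n))} (hW : IsPartition W)
    (hY : IsPartition Y) (hr : Refines W Y) {R : Finset (Fin n)} (hR : R ∈ Y)
    (S : Finset (Fin n)) :
    ∑ Q ∈ W.filter (· ⊆ R), (S ∩ Q).card = (S ∩ R).card := by
  rw [← Finset.card_biUnion]
  · congr 1
    ext i
    simp only [Finset.mem_biUnion, Finset.mem_filter, Finset.mem_inter]
    constructor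
    · rintro ⟨Q, ⟨hQ, hQR⟩, hiS, hiQ⟩
      exact ⟨hiS, hQR hiQ⟩
    · rintro ⟨hiS, hiR⟩
      obtain ⟨Q, hQ, hiQ⟩ := hW.2.2 i
      obtain ⟨R', hR', hQR'⟩ := hr Q hQ
      have : R' = R := part_eq hY hR' hR (hQR' hiQ) hiR
      exact ⟨Q, ⟨hQ, this ▸ hQR'⟩, hiS, hiQ⟩
  · intro Q hQ Q' hQ' hne
    rw [Finset.mem_coe, Finset.mem_filter] at hQ hQ'
    exact (hW.2.1 Q hQ.1 Q' hQ'.1 hne).mono inter_subset_right inter_subset_right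

/-- Conditioning on a finer partition gives larger conditional entropy is false;
rather: `H(X ∣ W) ≤ H(X ∣ Y)` when `W` refines `Y` (conditioning on more reduces entropy). -/
lemma cent_anti (hn : 0 < n) {X W Y : Finset (Finset (Fin n))}
    (hX : IsPartition X) (hW : IsPartition W) (hY : IsPartition Y) (hr : Refines W Y) :
    cent X W ≤ cent X Y := by
  rw [cent_eq hX W, cent_eq hX Y]
  rw [sum_refines hW hY hr]
  refine Finset.sum_le_sum fun R hR => ?_
  rw [Finset.sum_comm]
  refine Finset.sum_le_sum fun S _ => ?_
  have hn' : (0:ℝ) < n := by exact_mod_cast hn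
  have key := log_sum_ineq (W.filter (· ⊆ R)) (fun Q => ((S ∩ Q).card : ℝ))
    (fun Q => ((Q.card : ℝ))) n hn'
    (fun Q _ => by positivity)
    (fun Q _ => by
      show ((S ∩ Q).card : ℝ) ≤ ((Q.card : ℝ))
      exact_mod_cast Finset.card_le_card Finset.inter_subset_right)
    (fun Q hQ => by
      show (0:ℝ) < ((Q.card : ℝ))
      have := hW.1 Q (Finset.mem_filter.mp hQ).1
      exact_mod_cast Finset.card_pos.mpr this)
  have e1 : ∑ Q ∈ W.filter (· ⊆ R), ((S ∩ Q).card : ℝ) = ((S ∩ R).card : ℝ) := by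
    rw [← Nat.cast_sum, sum_card_inter_filter hW hY hr hR S]
  have e2 : ∑ Q ∈ W.filter (· ⊆ R), ((Q.card : ℝ)) = ((R.card : ℝ)) := by
    have := sum_card_inter_filter hW hY hr hR Finset.univ
    rw [← Nat.cast_sum]
    simp only [Finset.univ_inter] at this
    rw [this]
  rw [e1, e2] at key
  exact key

/-! ### Triangle inequality for conditional entropy -/

lemma cent_triangle (hn : 0 < n) {X Y Z : Finset (Finset (Fin n))}
    (hX : IsPartition X) (hY : IsPartition Y) (hZ : IsPartition Z) :
    cent X Z ≤ cent X Y + cent Y Z := by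
  have hM : IsPartition (pmeet Y Z) := pmeet_isPartition hY hZ
  have h1 : jent X Z ≤ jent X (pmeet Y Z) := jent_le_jent_pmeet hn hY hZ X
  have h2 : ent (pmeet Y Z) = jent Y Z := ent_pmeet hY hZ
  have h3 : cent X (pmeet Y Z) ≤ cent X Y := cent_anti hn hX hM hY pmeet_refines
  unfold cent at *
  linarith

end GVIAux

open GVIAux in
/-- For any weights `a, b > 0`, the generalized variation of information is a quasimetric on the
set of partitions of `{1,…,n}`: it satisfies the identity of indiscernibles and the triangle
inequality. -/
theorem gvi_is_quasimetric (n : ℕ) (a b : ℝ) (ha : 0 < a) (hb : 0 < b) :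
    (∀ ρ τ : Finset (Finset (Fin n)), IsPartition ρ → IsPartition τ →
      (gvi a b ρ τ = 0 ↔ ρ = τ)) ∧
    (∀ ρ₁ ρ₂ ρ₃ : Finset (Finset (Fin n)),
      IsPartition ρ₁ → IsPartition ρ₂ → IsPartition ρ₃ →
      gvi a b ρ₁ ρ₃ ≤ gvi a b ρ₁ ρ₂ + gvi a b ρ₂ ρ₃) := by
  have gvieq : ∀ ρ τ : Finset (Finset (Fin n)), gvi a b ρ τ = a * cent τ ρ + b * cent ρ τ := by
    intro ρ τ
    unfold gvi mi cent
    rw [jent_comm τ ρ]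
    ring
  rcases Nat.eq_zero_or_pos n with hn | hn
  · subst hn
    have empt : ∀ ρ : Finset (Finset (Fin 0)), IsPartition ρ → ρ = ∅ := by
      intro ρ hρ
      rw [Finset.eq_empty_iff_forall_notMem]
      intro S hS
      obtain ⟨i, _⟩ := hρ.1 S hS
      exact i.elim0
    constructor
    · intro ρ τ hρ hτ
      rw [empt ρ hρ, empt τ hτ]
      simp [gvi, mi, ent, jent]
    · intro ρ₁ ρ₂ ρ₃ h1 h2 h3
      rw [empt _ h1, empt _ h2, empt _ h3]
      simp [gvi, mi, ent, jent]
  · constructor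
    · intro ρ τ hρ hτ
      rw [gvieq]
      constructor
      · intro h
        have c1 : 0 ≤ cent τ ρ := cent_nonneg hn hτ ρ
        have c2 : 0 ≤ cent ρ τ := cent_nonneg hn hρ τ
        have h1 : cent τ ρ = 0 := by nlinarith
        have h2 : cent ρ τ = 0 := by nlinarith
        exact eq_of_refines hρ hτ (refines_of_cent_eq_zero hn hτ hρ h1)
          (refines_of_cent_eq_zero hn hρ hτ h2)
      · rintro rfl
        rw [cent_eq_zero_of_refines hρ (fun Q hQ => ⟨Q, hQ, Finset.Subset.refl Q⟩)]
        ring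
    · intro ρ₁ ρ₂ ρ₃ h1 h2 h3
      rw [gvieq, gvieq, gvieq]
      have t1 : cent ρ₃ ρ₁ ≤ cent ρ₃ ρ₂ + cent ρ₂ ρ₁ := cent_triangle hn h3 h2 h1
      have t2 : cent ρ₁ ρ₃ ≤ cent ρ₁ ρ₂ + cent ρ₂ ρ₃ := cent_triangle hn h1 h2 h3
      nlinarith
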